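/- Let V ⊆ ℂ^{n+2} be the complexification of a B-nondegenerate real subspace (so V̄ = V), α ∈ ℂ×, and L a null line with L and ρ_V L complementary. Then L̄ and ρ_V L̄ are also complementary, and for every λ for which both sides are defined, p^V_{α,L}(λ*) = C ∘ p^V_{α*,L̄}(λ) ∘ C, where C denotes the complex conjugation of ℂ^{n+2} and λ* := 1/λ̄, α* := 1/ᾱ. -/
import Mathlib


noncomputable section

open Module

/-- The complexification `ℂ^{n+2}` of `ℝ^{n+1,1}`. -/
abbrev Cn (n : ℕ) := Fin (n + 2) → ℂ

/-- The complex-bilinear extension `B` of the signature `(n+1,1)` inner product on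
`ℝ^{n+1,1}`. -/
def Bf (n : ℕ) (v w : Cn n) : ℂ :=
  ∑ i : Fin (n + 2), (if (i : ℕ) < n + 1 then 1 else -1) * v i * w i

lemma Bf_add_left {n : ℕ} (v v' w : Cn n) :
    Bf n (v + v') w = Bf n v w + Bf n v' w := by
  simp only [Bf, Pi.add_apply, ← Finset.sum_add_distrib]
  exact Finset.sum_congr rfl fun i _ => by ring

lemma Bf_smul_left {n : ℕ} (c : ℂ) (v w : Cn n) :
    Bf n (c • v) w = c * Bf n v w := by
  simp only [Bf, Pi.smul_apply, smul_eq_mul, Finset.mul_sum]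
  exact Finset.sum_congr rfl fun i _ => by ring

lemma Bf_zero_left {n : ℕ} (w : Cn n) : Bf n 0 w = 0 := by
  simp [Bf]

/-- Complex conjugation on `ℂ^{n+2}`, as a `conj`-semilinear automorphism;
its fixed point set is `ℝ^{n+1,1}`. -/
def conjSL (n : ℕ) : Cn n →ₛₗ[starRingEnd ℂ] Cn n where
  toFun v := fun i => starRingEnd ℂ (v i)
  map_add' a b := by funext i; simp
  map_smul' c v := by funext i; simp

instance : RingHomSurjective (starRingEnd ℂ) :=
  ⟨fun x => ⟨starRingEnd ℂ x, by simp⟩⟩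

/-- The conjugate `Ū` of a complex subspace `U` of `ℂ^{n+2}`. -/
def conjSub {n : ℕ} (U : Submodule ℂ (Cn n)) : Submodule ℂ (Cn n) :=
  U.map (conjSL n)

/-- The real points `ℝ^{n+1,1}` inside `ℂ^{n+2}`, as a real subspace. -/
def realSub (n : ℕ) : Submodule ℝ (Cn n) where
  carrier := {v | ∀ i, starRingEnd ℂ (v i) = v i}
  add_mem' := by
    intro a b ha hb i
    simp only [Pi.add_apply, map_add, ha i, hb i]
  zero_mem' := by intro i; simp
  smul_mem' := by
    intro c v hv i
    simp only [Pi.smul_apply, Complex.real_smul, map_mul, Complex.conj_ofReal, hv i]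

/-- The real points `W ∩ ℝ^{n+1,1}` of a complex subspace `W ⊆ ℂ^{n+2}`. -/
def realPoints {n : ℕ} (W : Submodule ℂ (Cn n)) : Submodule ℝ (Cn n) :=
  (W.restrictScalars ℝ) ⊓ realSub n

/-- The Gram matrix `diag(1,1,1,-1)`. -/
def gram31 (i j : Fin 4) : ℂ :=
  if i = j then (if (i : ℕ) < 3 then 1 else -1) else 0

/-- A real subspace `P` of `ℂ^{n+2}` has signature `(3,1)` if it admits a
basis whose Gram matrix with respect to `B` is `diag(1,1,1,-1)`. -/
def hasSig31 (n : ℕ) (P : Submodule ℝ (Cn n)) : Prop :=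
  ∃ b : Fin 4 → Cn n, (∀ i, b i ∈ P) ∧
    Submodule.span ℝ (Set.range b) = P ∧
    ∀ i j, Bf n (b i) (b j) = gram31 i j

/-- The orthogonal complement of a subspace with respect to `B`. -/
def perp (n : ℕ) (V : Submodule ℂ (Cn n)) : Submodule ℂ (Cn n) where
  carrier := {v | ∀ w ∈ V, Bf n v w = 0}
  add_mem' := by
    intro a b ha hb w hw
    rw [Bf_add_left, ha w hw, hb w hw, add_zero]
  zero_mem' := by
    intro w hw
    exact Bf_zero_left w
  smul_mem' := by
    intro c v hv w hw
    rw [Bf_smul_left, hv w hw, mul_zero]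

/-- `ρ` is the reflection across `V`: the identity on `V` and minus the identity
on `V^⊥`. -/
def IsReflection (n : ℕ) (V : Submodule ℂ (Cn n)) (ρ : Cn n →ₗ[ℂ] Cn n) : Prop :=
  (∀ v ∈ V, ρ v = v) ∧ (∀ v ∈ perp n V, ρ v = -v)

/-- The automorphism `Γ^{ℓ⁺}_{ℓ⁻}(λ)`, where `ℓ⁺, ℓ⁻` are the complementary null
lines spanned by `u` and `w`: it is multiplication by `λ` on `ℓ⁺`, by `λ⁻¹` on
`ℓ⁻` and the identity on `(ℓ⁺ ⊕ ℓ⁻)^⊥`. -/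
def GammaL (n : ℕ) (u w : Cn n) (lam : ℂ) : Cn n →ₗ[ℂ] Cn n where
  toFun v := v + ((lam - 1) * (Bf n v w / Bf n u w)) • u
      + ((lam⁻¹ - 1) * (Bf n v u / Bf n u w)) • w
  map_add' a b := by
    simp only [Bf_add_left]
    module
  map_smul' c v := by
    simp only [Bf_smul_left, RingHom.id_apply]
    module

/-- `λ ↦ λ* = 1/λ̄`. -/
def cstar (z : ℂ) : ℂ := (starRingEnd ℂ z)⁻¹

/-- The linear fractional transformation appearing in the simple factor
`p^V_{α,L}`. -/
def psi (α lam : ℂ) : ℂ := (1 + α) * (lam - α) / ((1 - α) * (lam + α))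

/-- The simple factor `p^V_{α,L}(λ) = Γ^L_{ρ_V L}((1+α)(λ-α)/((1-α)(λ+α)))`,
where `ρ` is the reflection across `V` and `ℓ` spans the null line `L`. -/
def pSF (n : ℕ) (ρ : Cn n →ₗ[ℂ] Cn n) (ℓ : Cn n) (α lam : ℂ) : Cn n →ₗ[ℂ] Cn n :=
  GammaL n ℓ (ρ ℓ) (psi α lam)

/-- The value `p^V_{α,L}(∞) = Γ^L_{ρ_V L}((1+α)/(1-α))`. -/
def pSFinf (n : ℕ) (ρ : Cn n →ₗ[ℂ] Cn n) (ℓ : Cn n) (α : ℂ) : Cn n →ₗ[ℂ] Cn n :=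
  GammaL n ℓ (ρ ℓ) ((1 + α) / (1 - α))


lemma conjSL_apply {n : ℕ} (v : Cn n) (i : Fin (n+2)) :
    conjSL n v i = starRingEnd ℂ (v i) := rfl

lemma conjSL_conjSL {n : ℕ} (v : Cn n) : conjSL n (conjSL n v) = v := by
  funext i; simp [conjSL_apply]

lemma Bf_conj {n : ℕ} (v w : Cn n) :
    Bf n (conjSL n v) (conjSL n w) = starRingEnd ℂ (Bf n v w) := by
  simp only [Bf, map_sum, conjSL_apply]
  refine Finset.sum_congr rfl fun i _ => ?_
  rw [map_mul, map_mul]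
  congr 2
  split <;> simp

lemma Bf_comm {n : ℕ} (v w : Cn n) : Bf n v w = Bf n w v := by
  unfold Bf
  exact Finset.sum_congr rfl fun i _ => by ring

lemma Bf_add_right' {n : ℕ} (v w w' : Cn n) :
    Bf n v (w + w') = Bf n v w + Bf n v w' := by
  rw [Bf_comm, Bf_add_left, Bf_comm w v, Bf_comm w' v]

lemma Bf_smul_right' {n : ℕ} (c : ℂ) (v w : Cn n) :
    Bf n v (c • w) = c * Bf n v w := by
  rw [Bf_comm, Bf_smul_left, Bf_comm w v]

/-- The map `a ↦ B(a, ·)|_V` into the dual of `V`. -/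
def Tmap (n : ℕ) (V : Submodule ℂ (Cn n)) : Cn n →ₗ[ℂ] Module.Dual ℂ V where
  toFun a :=
    { toFun := fun w => Bf n a (w : Cn n)
      map_add' := fun x y => Bf_add_right' a x y
      map_smul' := fun c x => by simpa using Bf_smul_right' c a x }
  map_add' a b := by ext w; exact Bf_add_left a b w
  map_smul' c a := by ext w; exact Bf_smul_left c a w

lemma exists_decomp {n : ℕ} (V : Submodule ℂ (Cn n))
    (hVnd : ∀ v ∈ V, (∀ w ∈ V, Bf n v w = 0) → v = 0) (x : Cn n) :
    ∃ a ∈ V, (∀ w ∈ V, Bf n (x - a) w = 0) := by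
  have hfd : FiniteDimensional ℂ V := inferInstance
  set T : V →ₗ[ℂ] Module.Dual ℂ V := (Tmap n V).comp V.subtype with hT
  have hinj : Function.Injective T := by
    rw [← LinearMap.ker_eq_bot]
    rw [Submodule.eq_bot_iff]
    intro a ha
    have : ∀ w ∈ V, Bf n (a : Cn n) w = 0 := by
      intro w hw
      have := congrFun (congrArg (fun f => f.toFun) ha) ⟨w, hw⟩
      simpa [T, Tmap] using this
    exact Subtype.ext (hVnd a a.2 this)
  have hsurj : Function.Surjective T :=
    (LinearMap.injective_iff_surjective_of_finrank_eq_finrank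
      (Subspace.dual_finrank_eq).symm).mp hinj
  obtain ⟨a, ha⟩ := hsurj (Tmap n V x)
  refine ⟨a, a.2, fun w hw => ?_⟩
  have := congrFun (congrArg (fun f => f.toFun) ha) ⟨w, hw⟩
  simp only [T, Tmap, LinearMap.comp_apply, Submodule.subtype_apply] at this
  simp only [LinearMap.coe_mk, AddHom.coe_mk] at this
  rw [sub_eq_add_neg, Bf_add_left x (-(a : Cn n)) w]
  have h2 : Bf n (-(a : Cn n)) w = -Bf n (a : Cn n) w := by
    have := Bf_smul_left (-1 : ℂ) (a : Cn n) w
    simpa using this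
  rw [h2, this]
  ring

lemma psi_star (α lam : ℂ) (hα : α ≠ 0) (h0 : lam ≠ 0)
    (h1 : lam ≠ cstar α) (h2 : lam ≠ -cstar α) :
    psi α (cstar lam) = starRingEnd ℂ (psi (cstar α) lam) := by
  have key : ∀ a m : ℂ, a ≠ 0 → m ≠ 0 → m ≠ a⁻¹ → m ≠ -a⁻¹ →
      psi a m⁻¹ = (1 + a⁻¹) * (m - a⁻¹) / ((1 - a⁻¹) * (m + a⁻¹)) := by
    intro a m ha hm hm1 hm2
    by_cases ha1 : a = 1
    · subst ha1; simp [psi]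
    by_cases ha2 : a = -1
    · subst ha2; norm_num [psi]
    have hd1 : (1 : ℂ) - a ≠ 0 := sub_ne_zero.mpr (fun h => ha1 h.symm)
    have hd2 : (1 : ℂ) + a ≠ 0 := by
      intro h; apply ha2; linear_combination h
    have hd3 : m + a⁻¹ ≠ 0 := by
      intro h; apply hm2; linear_combination h
    have hd4 : m⁻¹ + a ≠ 0 := by
      intro h
      apply hm2
      have h' : m⁻¹ = -a := by linear_combination h
      have h'' := congrArg Inv.inv h'
      rw [inv_inv, inv_neg] at h''
      exact h''
    have hd1' : (1 : ℂ) - a⁻¹ ≠ 0 := by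
      intro h
      apply ha1
      have h' : a⁻¹ = 1 := by linear_combination -h
      exact inv_eq_one.mp h'
    unfold psi
    rw [div_eq_div_iff (mul_ne_zero hd1 hd4) (mul_ne_zero hd1' hd3)]
    field_simp
    ring
  have hconj : starRingEnd ℂ lam ≠ 0 := by simpa using h0
  have e1 : cstar lam = (starRingEnd ℂ lam)⁻¹ := rfl
  have e2 : starRingEnd ℂ (cstar α) = α⁻¹ := by
    simp [cstar, map_inv₀]
  have h1' : starRingEnd ℂ lam ≠ α⁻¹ := by
    intro h
    apply h1
    have := congrArg (starRingEnd ℂ) h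
    simpa [cstar, map_inv₀] using this
  have h2' : starRingEnd ℂ lam ≠ -α⁻¹ := by
    intro h
    apply h2
    have := congrArg (starRingEnd ℂ) h
    simpa [cstar, map_inv₀] using this
  rw [e1, key α (starRingEnd ℂ lam) hα hconj h1' h2']
  simp only [psi, map_div₀, map_mul, map_add, map_sub, map_one, e2]

/-- Let `V` be the complexification of a `B`-nondegenerate real
subspace (so `V̄ = V`, with reflection `ρ = ρ_V`), `α ∈ ℂ^×`, and `L = ⟨ℓ⟩` a null line
with `L, ρ_V L` complementary.  Then `L̄, ρ_V L̄` are also complementary and, for every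
`λ` for which both sides are defined, `p^V_{α,L}(λ*) = C ∘ p^V_{α*,L̄}(λ) ∘ C`. -/
theorem statement6 (n : ℕ) (V : Submodule ℂ (Cn n))
    (hVconj : conjSub V = V)
    (hVnd : ∀ v ∈ V, (∀ w ∈ V, Bf n v w = 0) → v = 0)
    (ρ : Cn n →ₗ[ℂ] Cn n) (hρ : IsReflection n V ρ)
    (α : ℂ) (hα : α ≠ 0)
    (ℓ : Cn n) (hℓ : ℓ ≠ 0) (hℓnull : Bf n ℓ ℓ = 0)
    (hℓcompl : Bf n ℓ (ρ ℓ) ≠ 0) :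
    Bf n (conjSL n ℓ) (ρ (conjSL n ℓ)) ≠ 0 ∧
      ∀ lam : ℂ, lam ≠ 0 → lam ≠ cstar α → lam ≠ -cstar α →
        ∀ v : Cn n,
          pSF n ρ ℓ α (cstar lam) v =
            conjSL n (pSF n ρ (conjSL n ℓ) (cstar α) lam (conjSL n v)) := by
  have hconjmem : ∀ x ∈ V, conjSL n x ∈ V := by
    intro x hx
    rw [← hVconj]
    exact ⟨x, hx, rfl⟩
  have hperpconj : ∀ b ∈ perp n V, conjSL n b ∈ perp n V := by
    intro b hb w hw
    have hw' : w = conjSL n (conjSL n w) := (conjSL_conjSL w).symm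
    rw [hw', Bf_conj, hb _ (hconjmem w hw), map_zero]
  have hrho : ∀ x, ρ (conjSL n x) = conjSL n (ρ x) := by
    intro x
    obtain ⟨a, haV, hb⟩ := exists_decomp V hVnd x
    have hbperp : x - a ∈ perp n V := hb
    have hx : x = a + (x - a) := by abel
    have hρx : ρ x = a - (x - a) := by
      conv_lhs => rw [hx]
      rw [map_add, hρ.1 a haV, hρ.2 _ hbperp]
      abel
    have hcx : conjSL n x = conjSL n a + conjSL n (x - a) := by
      conv_lhs => rw [hx]
      rw [map_add]
    rw [hcx, map_add, hρ.1 _ (hconjmem a haV), hρ.2 _ (hperpconj _ hbperp), hρx]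
    simp only [map_sub]
    abel
  constructor
  · rw [hrho ℓ, Bf_conj]
    simpa using hℓcompl
  · intro lam h0 h1 h2 v
    have hpsi := psi_star α lam hα h0 h1 h2
    simp only [pSF, GammaL, LinearMap.coe_mk, AddHom.coe_mk]
    rw [hrho ℓ, map_add, map_add, LinearMap.map_smulₛₗ, LinearMap.map_smulₛₗ]
    rw [conjSL_conjSL, conjSL_conjSL, conjSL_conjSL, Bf_conj, Bf_conj, Bf_conj,
      hpsi]
    simp only [map_mul, map_sub, map_one, map_div₀, map_inv₀, Complex.conj_conj]

end
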